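/- Let η ∈ (-1, 1) and let c ∈ (-1, 1) satisfy ∫_{-1}^{1} (v - c)/(1 + η · sgn(v - c)) dv > 0 (which holds exactly when c < c^*, the unique zero of this integral as a function of c). For λ ∈ [0, (1-η)/(1+c)), define h(λ) = ∫_{-1}^{1} (v - c) / ( 1 + η · sgn(v - c) + λ (v - c) ) dv; the denominator is strictly positive for all v ∈ (-1,1), v ≠ c, in this range of λ. Then h(0) > 0 and h(λ) → -∞ as λ → ((1-η)/(1+c))⁻, and consequently there exists a smallest λ_- ∈ (0, (1-η)/(1+c)) with h(λ_-) = 0. -/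

import Mathlib

open Filter

open MeasureTheory intervalIntegral

lemma back_eqOn_left (η c lam : ℝ) (hc : (-1:ℝ) ≤ c) :
    Set.EqOn (fun v => (v - c) / (1 + η * Real.sign (v - c) + lam * (v - c)))
      (fun v => (v - c) / ((1 - η) + lam * (v - c))) (Set.uIcc (-1 : ℝ) c) := by
  intro v hv
  rw [Set.uIcc_of_le hc] at hv
  rcases eq_or_lt_of_le hv.2 with hvc | hvc
  · subst hvc; simp
  · simp only [Real.sign_of_neg (show v - c < 0 by linarith)]
    ring_nf

lemma back_eqOn_right (η c lam : ℝ) (hc : c ≤ 1) :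
    Set.EqOn (fun v => (v - c) / (1 + η * Real.sign (v - c) + lam * (v - c)))
      (fun v => (v - c) / ((1 + η) + lam * (v - c))) (Set.uIcc c 1) := by
  intro v hv
  rw [Set.uIcc_of_le hc] at hv
  rcases eq_or_lt_of_le hv.1 with hvc | hvc
  · subst hvc; simp
  · simp only [Real.sign_of_pos (show 0 < v - c by linarith)]
    ring_nf

-- denominator positivity on left piece
lemma back_den_left (η c lam v : ℝ) (hc1 : -1 < c) (hl0 : 0 ≤ lam)
    (hlq : lam * (1 + c) < 1 - η) (hv : -1 ≤ v) :
    0 < (1 - η) + lam * (v - c) := by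
  nlinarith [mul_le_mul_of_nonneg_left (show (-1:ℝ) - c ≤ v - c by linarith) hl0]

lemma back_den_right (η c lam v : ℝ) (hη1 : -1 < η) (hl0 : 0 ≤ lam) (hv : c ≤ v) :
    0 < (1 + η) + lam * (v - c) := by
  nlinarith [mul_nonneg hl0 (show (0:ℝ) ≤ v - c by linarith)]

lemma back_cont_left (η c lam : ℝ) (hc1 : -1 < c) (hl0 : 0 ≤ lam)
    (hlq : lam * (1 + c) < 1 - η) :
    ContinuousOn (fun v => (v - c) / ((1 - η) + lam * (v - c))) (Set.uIcc (-1 : ℝ) c) := by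
  apply ContinuousOn.div (by fun_prop) (by fun_prop)
  intro v hv
  rw [Set.uIcc_of_le hc1.le] at hv
  exact (back_den_left η c lam v hc1 hl0 hlq hv.1).ne'

lemma back_cont_right (η c lam : ℝ) (hη1 : -1 < η) (hc2 : c < 1) (hl0 : 0 ≤ lam) :
    ContinuousOn (fun v => (v - c) / ((1 + η) + lam * (v - c))) (Set.uIcc c (1 : ℝ)) := by
  apply ContinuousOn.div (by fun_prop) (by fun_prop)
  intro v hv
  rw [Set.uIcc_of_le hc2.le] at hv
  exact (back_den_right η c lam v hη1 hl0 hv.1).ne'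

lemma back_split (η c lam : ℝ) (hη1 : -1 < η) (hη2 : η < 1) (hc1 : -1 < c) (hc2 : c < 1)
    (hl0 : 0 ≤ lam) (hlq : lam * (1 + c) < 1 - η) :
    (∫ v in (-1:ℝ)..1, (v - c) / (1 + η * Real.sign (v - c) + lam * (v - c)))
      = (∫ v in (-1:ℝ)..c, (v - c) / ((1 - η) + lam * (v - c)))
        + ∫ v in c..(1:ℝ), (v - c) / ((1 + η) + lam * (v - c)) := by
  have hIl : IntervalIntegrable (fun v => (v - c) / (1 + η * Real.sign (v - c) + lam * (v - c)))
      volume (-1) c :=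
    ((back_cont_left η c lam hc1 hl0 hlq).intervalIntegrable).congr
      (fun x hx =>
        (back_eqOn_left η c lam hc1.le (Set.uIoc_subset_uIcc hx)).symm)
  have hIr : IntervalIntegrable (fun v => (v - c) / (1 + η * Real.sign (v - c) + lam * (v - c)))
      volume c 1 :=
    ((back_cont_right η c lam hη1 hc2 hl0).intervalIntegrable).congr
      (fun x hx =>
        (back_eqOn_right η c lam hc2.le (Set.uIoc_subset_uIcc hx)).symm)
  rw [← intervalIntegral.integral_add_adjacent_intervals hIl hIr,
    intervalIntegral.integral_congr (back_eqOn_left η c lam hc1.le),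
    intervalIntegral.integral_congr (back_eqOn_right η c lam hc2.le)]

lemma back_eval (A c lam s t : ℝ) (hlam : lam ≠ 0)
    (hpos : ∀ v ∈ Set.uIcc s t, 0 < A + lam * (v - c)) :
    ∫ v in s..t, (v - c) / (A + lam * (v - c)) =
      ((t - c) / lam - (A / lam ^ 2) * Real.log (A + lam * (t - c)))
      - ((s - c) / lam - (A / lam ^ 2) * Real.log (A + lam * (s - c))) := by
  apply intervalIntegral.integral_eq_sub_of_hasDerivAt
  · intro v hv
    have hden := hpos v hv
    have h1 : HasDerivAt (fun v : ℝ => A + lam * (v - c)) lam v := by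
      simpa using (((hasDerivAt_id v).sub_const c).const_mul lam).const_add A
    have h2 := h1.log hden.ne'
    have h3 : HasDerivAt (fun v : ℝ => (v - c) / lam) (1 / lam) v := by
      simpa using ((hasDerivAt_id v).sub_const c).div_const lam
    have h4 := h3.sub (h2.const_mul (A / lam ^ 2))
    convert h4 using 1
    · funext x; rfl
    have hD := hden.ne'
    have key : v - c = ((A + lam * (v - c)) - A) / lam := by
      rw [add_sub_cancel_left, mul_div_cancel_left₀ _ hlam]
    nth_rewrite 1 [key]
    generalize A + lam * (v - c) = D at hD ⊢
    field_simp
  · apply ContinuousOn.intervalIntegrable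
    apply ContinuousOn.div (by fun_prop) (by fun_prop)
    exact fun v hv => (hpos v hv).ne'

lemma back_closed (η c lam : ℝ) (hη1 : -1 < η) (hη2 : η < 1) (hc1 : -1 < c) (hc2 : c < 1)
    (hl0 : 0 < lam) (hlq : lam * (1 + c) < 1 - η) :
    (∫ v in (-1:ℝ)..1, (v - c) / (1 + η * Real.sign (v - c) + lam * (v - c)))
      = 2 / lam - ((1 - η) / lam ^ 2) * (Real.log (1 - η) - Real.log ((1 - η) - lam * (1 + c)))
        - ((1 + η) / lam ^ 2) * (Real.log ((1 + η) + lam * (1 - c)) - Real.log (1 + η)) := by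
  rw [back_split η c lam hη1 hη2 hc1 hc2 hl0.le hlq,
    back_eval (1 - η) c lam (-1) c hl0.ne'
      (fun v hv => back_den_left η c lam v hc1 hl0.le hlq
        (by rw [Set.uIcc_of_le hc1.le] at hv; exact hv.1)),
    back_eval (1 + η) c lam c 1 hl0.ne'
      (fun v hv => back_den_right η c lam v hη1 hl0.le
        (by rw [Set.uIcc_of_le hc2.le] at hv; exact hv.1))]
  have e1 : (1 - η) + lam * (-1 - c) = (1 - η) - lam * (1 + c) := by ring
  have e2 : (1 - η) + lam * (c - c) = 1 - η := by ring
  have e3 : (1 + η) + lam * (c - c) = 1 + η := by ring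
  rw [e1, e2, e3]
  field_simp
  ring

lemma back_tendsto (η c : ℝ) (hη1 : -1 < η) (hη2 : η < 1) (hc1 : -1 < c) (hc2 : c < 1)
    (h : ℝ → ℝ)
    (hh : ∀ lam, h lam =
      ∫ v in (-1 : ℝ)..1, (v - c) / (1 + η * Real.sign (v - c) + lam * (v - c))) :
    Tendsto h (nhdsWithin ((1 - η) / (1 + c)) (Set.Iio ((1 - η) / (1 + c)))) atBot := by
  have hq : (0:ℝ) < 1 + c := by linarith
  have hb : (0:ℝ) < 1 - η := by linarith
  set Λ : ℝ := (1 - η) / (1 + c) with hΛ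
  have hΛ0 : 0 < Λ := div_pos hb hq
  set B : ℝ → ℝ := fun lam =>
    2 / lam - ((1 - η) / lam ^ 2) * Real.log (1 - η)
      - ((1 + η) / lam ^ 2) * (Real.log ((1 + η) + lam * (1 - c)) - Real.log (1 + η))
    with hB
  -- h agrees with B + log-term eventually
  have hev : ∀ᶠ lam in nhdsWithin Λ (Set.Iio Λ),
      h lam = B lam + ((1 - η) / lam ^ 2) * Real.log ((1 - η) - lam * (1 + c)) := by
    have hmem : Set.Ioo 0 Λ ∈ nhdsWithin Λ (Set.Iio Λ) := by
      apply mem_nhdsWithin.mpr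
      exact ⟨Set.Ioi 0, isOpen_Ioi, hΛ0, fun x hx => ⟨hx.1, hx.2⟩⟩
    filter_upwards [hmem] with lam hlam
    have hlq : lam * (1 + c) < 1 - η := by
      have := hlam.2
      rw [hΛ, lt_div_iff₀ hq] at this
      exact this
    rw [hh lam, back_closed η c lam hη1 hη2 hc1 hc2 hlam.1 hlq, hB]
    ring
  rw [tendsto_congr' hev]
  apply Filter.Tendsto.add_atBot (C := B Λ)
  · -- B is continuous at Λ
    apply tendsto_nhdsWithin_of_tendsto_nhds
    have hlog : ContinuousAt Real.log ((1 + η) + Λ * (1 - c)) :=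
      Real.continuousAt_log (by nlinarith)
    rw [hB]
    apply Filter.Tendsto.sub
    apply Filter.Tendsto.sub
    · exact (continuousAt_const.div continuousAt_id hΛ0.ne').tendsto
    · exact ((continuousAt_const.div (continuousAt_id.pow 2)
        (pow_ne_zero 2 hΛ0.ne')).mul continuousAt_const).tendsto
    · apply Filter.Tendsto.mul
      · exact (continuousAt_const.div (continuousAt_id.pow 2) (pow_ne_zero 2 hΛ0.ne')).tendsto
      · apply Filter.Tendsto.sub _ tendsto_const_nhds
        exact (((continuous_const.add (continuous_id.mul continuous_const)).continuousAt).log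
          (by show 1 + η + Λ * (1 - c) ≠ 0
              nlinarith [mul_pos hΛ0 (show (0:ℝ) < 1 - c by linarith)])).tendsto
  · -- positive coefficient times log → -∞
    apply Filter.Tendsto.pos_mul_atBot (C := (1 - η) / Λ ^ 2)
    · positivity
    · exact tendsto_nhdsWithin_of_tendsto_nhds
        (continuousAt_const.div (continuousAt_id.pow 2) (pow_ne_zero 2 hΛ0.ne')).tendsto
    · apply Real.tendsto_log_nhdsGT_zero.comp
      rw [tendsto_nhdsWithin_iff]
      constructor
      · apply tendsto_nhdsWithin_of_tendsto_nhds
        have : Tendsto (fun lam : ℝ => (1 - η) - lam * (1 + c)) (nhds Λ)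
            (nhds ((1 - η) - Λ * (1 + c))) :=
          ((continuous_const.sub (continuous_id.mul continuous_const)).tendsto Λ)
        have hΛval : (1 - η) - Λ * (1 + c) = 0 := by
          rw [hΛ]; field_simp; ring
        rwa [hΛval] at this
      · filter_upwards [self_mem_nhdsWithin] with lam hlam
        have : lam * (1 + c) < 1 - η := by
          rw [Set.mem_Iio, hΛ, lt_div_iff₀ hq] at hlam
          exact hlam
        simpa [Set.mem_Ioi] using by linarith

lemma back_mono (η c μ lam : ℝ) (hη1 : -1 < η) (hη2 : η < 1) (hc1 : -1 < c) (hc2 : c < 1)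
    (hμ0 : 0 ≤ μ) (hμl : μ ≤ lam) (hlq : lam * (1 + c) < 1 - η) :
    (∫ v in (-1:ℝ)..1, (v - c) / (1 + η * Real.sign (v - c) + lam * (v - c)))
      ≤ ∫ v in (-1:ℝ)..1, (v - c) / (1 + η * Real.sign (v - c) + μ * (v - c)) := by
  have hq : (0:ℝ) < 1 + c := by linarith
  have hl0 : 0 ≤ lam := le_trans hμ0 hμl
  have hμq : μ * (1 + c) < 1 - η := lt_of_le_of_lt (by nlinarith) hlq
  rw [back_split η c lam hη1 hη2 hc1 hc2 hl0 hlq,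
    back_split η c μ hη1 hη2 hc1 hc2 hμ0 hμq]
  apply add_le_add
  · apply intervalIntegral.integral_mono_on hc1.le
      ((back_cont_left η c lam hc1 hl0 hlq).intervalIntegrable)
      ((back_cont_left η c μ hc1 hμ0 hμq).intervalIntegrable)
    intro v hv
    have d1 := back_den_left η c lam v hc1 hl0 hlq hv.1
    have d2 := back_den_left η c μ v hc1 hμ0 hμq hv.1
    rw [div_le_div_iff₀ d1 d2]
    nlinarith [sq_nonneg (v - c)]
  · apply intervalIntegral.integral_mono_on hc2.le
      ((back_cont_right η c lam hη1 hc2 hl0).intervalIntegrable)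
      ((back_cont_right η c μ hη1 hc2 hμ0).intervalIntegrable)
    intro v hv
    have d1 := back_den_right η c lam v hη1 hl0 hv.1
    have d2 := back_den_right η c μ v hη1 hμ0 hv.1
    rw [div_le_div_iff₀ d1 d2]
    nlinarith [sq_nonneg (v - c)]

lemma back_small (η c lam : ℝ) (hη1 : -1 < η) (hη2 : η < 1) (hc1 : -1 < c) (hc2 : c < 1)
    (hl0 : 0 ≤ lam) (hlq : lam * (1 + c) ≤ (1 - η) / 2) :
    (∫ v in (-1:ℝ)..1, (v - c) / (1 + η * Real.sign (v - c) + 0 * (v - c)))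
      - (∫ v in (-1:ℝ)..1, (v - c) / (1 + η * Real.sign (v - c) + lam * (v - c)))
      ≤ lam * (16 / (1 - η) ^ 2 + 8 / (1 + η) ^ 2) := by
  have hb : (0:ℝ) < 1 - η := by linarith
  have ha : (0:ℝ) < 1 + η := by linarith
  have hq : (0:ℝ) < 1 + c := by linarith
  have hlq' : lam * (1 + c) < 1 - η := by linarith
  have h0q : (0:ℝ) * (1 + c) < 1 - η := by linarith
  rw [back_split η c lam hη1 hη2 hc1 hc2 hl0 hlq',
    back_split η c 0 hη1 hη2 hc1 hc2 le_rfl h0q]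
  have hIl1 := (back_cont_left η c lam hc1 hl0 hlq').intervalIntegrable (μ := MeasureTheory.volume)
  have hIl0 := (back_cont_left η c 0 hc1 le_rfl h0q).intervalIntegrable (μ := MeasureTheory.volume)
  have hIr1 := (back_cont_right η c lam hη1 hc2 hl0).intervalIntegrable (μ := MeasureTheory.volume)
  have hIr0 := (back_cont_right η c 0 hη1 hc2 le_rfl).intervalIntegrable (μ := MeasureTheory.volume)
  have Hleft : (∫ v in (-1:ℝ)..c, (v - c) / ((1 - η) + 0 * (v - c)))
      - (∫ v in (-1:ℝ)..c, (v - c) / ((1 - η) + lam * (v - c)))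
      ≤ (1 + c) * (lam * (8 / (1 - η) ^ 2)) := by
    rw [← intervalIntegral.integral_sub hIl0 hIl1]
    refine (intervalIntegral.integral_mono_on (μ := MeasureTheory.volume) hc1.le
      (hIl0.sub hIl1)
      (_root_.intervalIntegrable_const (c := lam * (8 / (1 - η) ^ 2)))
      (fun v hv => ?_)).trans (le_of_eq ?_)
    · have hd2 : (1 - η) / 2 ≤ (1 - η) + lam * (v - c) := by
        nlinarith [mul_le_mul_of_nonneg_left
          (show (-1:ℝ) - c ≤ v - c by linarith [hv.1]) hl0]
      have hd0 : 0 < (1 - η) + lam * (v - c) := by linarith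
      have expand : (v - c) / ((1 - η) + 0 * (v - c)) - (v - c) / ((1 - η) + lam * (v - c))
          = lam * (v - c) ^ 2 / ((1 - η) * ((1 - η) + lam * (v - c))) := by
        rw [zero_mul, add_zero, div_sub_div _ _ hb.ne' hd0.ne']
        ring
      rw [expand]
      have hsq : (v - c) ^ 2 ≤ 4 := by
        nlinarith [hv.1, hv.2, mul_nonneg (show (0:ℝ) ≤ v - c + 2 by linarith [hv.1])
          (show (0:ℝ) ≤ -(v - c) by linarith [hv.2])]
      have hstep : lam * (v - c) ^ 2 / ((1 - η) * ((1 - η) + lam * (v - c)))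
          ≤ (4 * lam) / ((1 - η) * ((1 - η) / 2)) := by
        apply div_le_div₀ (by positivity) ?_ (by positivity) (by nlinarith)
        nlinarith [mul_le_mul_of_nonneg_left hsq hl0]
      refine hstep.trans (le_of_eq ?_)
      field_simp
      ring
    · rw [intervalIntegral.integral_const, smul_eq_mul]
      try ring
  have Hright : (∫ v in c..(1:ℝ), (v - c) / ((1 + η) + 0 * (v - c)))
      - (∫ v in c..(1:ℝ), (v - c) / ((1 + η) + lam * (v - c)))
      ≤ (1 - c) * (lam * (4 / (1 + η) ^ 2)) := by
    rw [← intervalIntegral.integral_sub hIr0 hIr1]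
    refine (intervalIntegral.integral_mono_on (μ := MeasureTheory.volume) hc2.le
      (hIr0.sub hIr1)
      (_root_.intervalIntegrable_const (c := lam * (4 / (1 + η) ^ 2)))
      (fun v hv => ?_)).trans (le_of_eq ?_)
    · have hd0 : 0 < (1 + η) + lam * (v - c) := back_den_right η c lam v hη1 hl0 hv.1
      have hd2 : (1 + η) ≤ (1 + η) + lam * (v - c) := by
        nlinarith [mul_nonneg hl0 (show (0:ℝ) ≤ v - c by linarith [hv.1])]
      have expand : (v - c) / ((1 + η) + 0 * (v - c)) - (v - c) / ((1 + η) + lam * (v - c))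
          = lam * (v - c) ^ 2 / ((1 + η) * ((1 + η) + lam * (v - c))) := by
        rw [zero_mul, add_zero, div_sub_div _ _ ha.ne' hd0.ne']
        ring
      rw [expand]
      have hsq : (v - c) ^ 2 ≤ 4 := by
        nlinarith [hv.1, hv.2, mul_nonneg (show (0:ℝ) ≤ v - c by linarith [hv.1])
          (show (0:ℝ) ≤ 2 - (v - c) by linarith [hv.2])]
      have hstep : lam * (v - c) ^ 2 / ((1 + η) * ((1 + η) + lam * (v - c)))
          ≤ (4 * lam) / ((1 + η) * (1 + η)) := by
        apply div_le_div₀ (by positivity) ?_ (by positivity) (by nlinarith)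
        nlinarith [mul_le_mul_of_nonneg_left hsq hl0]
      refine hstep.trans (le_of_eq ?_)
      field_simp
    · rw [intervalIntegral.integral_const, smul_eq_mul]
      try ring
  have key : lam * (16 / (1 - η) ^ 2 + 8 / (1 + η) ^ 2)
      = 2 * (lam * (8 / (1 - η) ^ 2)) + 2 * (lam * (4 / (1 + η) ^ 2)) := by ring
  rw [key]
  have h1 : (1 + c) * (lam * (8 / (1 - η) ^ 2)) ≤ 2 * (lam * (8 / (1 - η) ^ 2)) := by
    apply mul_le_mul_of_nonneg_right (by linarith) (by positivity)
  have h2 : (1 - c) * (lam * (4 / (1 + η) ^ 2)) ≤ 2 * (lam * (4 / (1 + η) ^ 2)) := by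
    apply mul_le_mul_of_nonneg_right (by linarith) (by positivity)
  linarith

lemma back_contOn (η c s t : ℝ) (hη1 : -1 < η) (hη2 : η < 1) (hc1 : -1 < c) (hc2 : c < 1)
    (hs : 0 < s) (ht : t * (1 + c) < 1 - η)
    (h : ℝ → ℝ)
    (hh : ∀ lam, h lam =
      ∫ v in (-1 : ℝ)..1, (v - c) / (1 + η * Real.sign (v - c) + lam * (v - c))) :
    ContinuousOn h (Set.Icc s t) := by
  have hq : (0:ℝ) < 1 + c := by linarith
  have hb : (0:ℝ) < 1 - η := by linarith
  have ha : (0:ℝ) < 1 + η := by linarith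
  have hne : ∀ lam ∈ Set.Icc s t, lam ≠ 0 := fun lam hl => (lt_of_lt_of_le hs hl.1).ne'
  have harg1 : ∀ lam ∈ Set.Icc s t, (1 - η) - lam * (1 + c) ≠ 0 := by
    intro lam hl
    have : lam * (1 + c) ≤ t * (1 + c) := mul_le_mul_of_nonneg_right hl.2 hq.le
    have : lam * (1 + c) < 1 - η := lt_of_le_of_lt this ht
    linarith
  have harg2 : ∀ lam ∈ Set.Icc s t, (1 + η) + lam * (1 - c) ≠ 0 := by
    intro lam hl
    have h1 : 0 < lam * (1 - c) := mul_pos (lt_of_lt_of_le hs hl.1) (by linarith)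
    positivity
  apply ContinuousOn.congr (f := fun lam =>
    2 / lam - ((1 - η) / lam ^ 2) * (Real.log (1 - η) - Real.log ((1 - η) - lam * (1 + c)))
      - ((1 + η) / lam ^ 2) * (Real.log ((1 + η) + lam * (1 - c)) - Real.log (1 + η)))
  · apply ContinuousOn.sub
    apply ContinuousOn.sub
    · exact continuousOn_const.div continuousOn_id hne
    · apply ContinuousOn.mul
      · exact continuousOn_const.div (continuousOn_id.pow 2)
          (fun lam hl => pow_ne_zero 2 (hne lam hl))
      · apply ContinuousOn.sub continuousOn_const
        exact ContinuousOn.log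
          (continuousOn_const.sub (continuousOn_id.mul continuousOn_const)) harg1
    · apply ContinuousOn.mul
      · exact continuousOn_const.div (continuousOn_id.pow 2)
          (fun lam hl => pow_ne_zero 2 (hne lam hl))
      · apply ContinuousOn.sub _ continuousOn_const
        exact ContinuousOn.log
          (continuousOn_const.add (continuousOn_id.mul continuousOn_const)) harg2
  · intro lam hl
    rw [hh lam]
    exact back_closed η c lam hη1 hη2 hc1 hc2 (lt_of_lt_of_le hs hl.1)
      (lt_of_le_of_lt (mul_le_mul_of_nonneg_right hl.2 hq.le) ht)

/-- Existence of the growth exponent `λ₋` at the back of the wave: if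
`∫_{-1}^1 (v-c)/(1 + η sgn(v-c)) dv > 0` (i.e. `c < c^*`), then the function
`h(λ) = ∫_{-1}^1 (v-c)/(1 + η sgn(v-c) + λ(v-c)) dv`, whose denominator stays
positive for `λ ∈ [0, (1-η)/(1+c))`, satisfies `h(0) > 0`, tends to `-∞` as
`λ → ((1-η)/(1+c))⁻`, and admits a smallest zero `λ₋ ∈ (0, (1-η)/(1+c))`. -/
theorem growth_exponent_exists_at_back
    (η c : ℝ) (hη : η ∈ Set.Ioo (-1 : ℝ) 1) (hc : c ∈ Set.Ioo (-1 : ℝ) 1)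
    (hflux : 0 < ∫ v in (-1 : ℝ)..1, (v - c) / (1 + η * Real.sign (v - c)))
    (h : ℝ → ℝ)
    (hh : ∀ lam, h lam =
      ∫ v in (-1 : ℝ)..1,
        (v - c) / (1 + η * Real.sign (v - c) + lam * (v - c))) :
    (∀ lam ∈ Set.Ico (0 : ℝ) ((1 - η) / (1 + c)),
      ∀ v ∈ Set.Ioo (-1 : ℝ) 1, v ≠ c →
        0 < 1 + η * Real.sign (v - c) + lam * (v - c)) ∧
    0 < h 0 ∧
    Tendsto h (nhdsWithin ((1 - η) / (1 + c)) (Set.Iio ((1 - η) / (1 + c))))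
      atBot ∧
    ∃ lamm ∈ Set.Ioo (0 : ℝ) ((1 - η) / (1 + c)), h lamm = 0 ∧
      ∀ μ ∈ Set.Ioo (0 : ℝ) ((1 - η) / (1 + c)), h μ = 0 → lamm ≤ μ := by

  obtain ⟨hη1, hη2⟩ := hη
  obtain ⟨hc1, hc2⟩ := hc
  have hq : (0:ℝ) < 1 + c := by linarith
  have hb : (0:ℝ) < 1 - η := by linarith
  have ha : (0:ℝ) < 1 + η := by linarith
  set Λ : ℝ := (1 - η) / (1 + c) with hΛ
  have hΛ0 : 0 < Λ := div_pos hb hq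
  have hΛiff : ∀ lam : ℝ, lam < Λ ↔ lam * (1 + c) < 1 - η := fun lam => lt_div_iff₀ hq
  -- part 1
  have part1 : ∀ lam ∈ Set.Ico (0 : ℝ) Λ,
      ∀ v ∈ Set.Ioo (-1 : ℝ) 1, v ≠ c →
        0 < 1 + η * Real.sign (v - c) + lam * (v - c) := by
    intro lam hlam v hv hvc
    have hlq : lam * (1 + c) < 1 - η := (hΛiff lam).mp hlam.2
    rcases lt_or_gt_of_ne hvc with hvlt | hvgt
    · rw [Real.sign_of_neg (show v - c < 0 by linarith)]
      have := back_den_left η c lam v hc1 hlam.1 hlq hv.1.le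
      linarith
    · rw [Real.sign_of_pos (show 0 < v - c by linarith)]
      have := back_den_right η c lam v hη1 hlam.1 hvgt.le
      linarith
  -- part 2
  have h0pos : 0 < h 0 := by
    rw [hh 0]
    simpa using hflux
  -- part 3
  have htend : Tendsto h (nhdsWithin Λ (Set.Iio Λ)) atBot :=
    back_tendsto η c hη1 hη2 hc1 hc2 h hh
  refine ⟨part1, h0pos, htend, ?_⟩
  -- choose lam0 with h lam0 > 0
  set C : ℝ := 16 / (1 - η) ^ 2 + 8 / (1 + η) ^ 2 with hCdef
  have hC : 0 < C := by positivity
  set lam0 : ℝ := min ((1 - η) / (2 * (1 + c))) (h 0 / (2 * C)) with hlam0def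
  have hlam0pos : 0 < lam0 := lt_min (by positivity) (by positivity)
  have hlam0q : lam0 * (1 + c) ≤ (1 - η) / 2 := by
    have h1 : lam0 ≤ (1 - η) / (2 * (1 + c)) := min_le_left _ _
    rw [le_div_iff₀ (by positivity)] at h1
    nlinarith
  have hlam0Λ : lam0 < Λ := by
    have h1 : lam0 ≤ (1 - η) / (2 * (1 + c)) := min_le_left _ _
    have h2 : (1 - η) / (2 * (1 + c)) = Λ / 2 := by
      rw [hΛ, div_div, mul_comm]
    rw [h2] at h1
    linarith
  have hlam0h : 0 < h lam0 := by
    have hsmall := back_small η c lam0 hη1 hη2 hc1 hc2 hlam0pos.le hlam0q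
    rw [← hh 0, ← hh lam0] at hsmall
    have h1 : lam0 ≤ h 0 / (2 * C) := min_le_right _ _
    have h2 : lam0 * C ≤ (h 0 / (2 * C)) * C := mul_le_mul_of_nonneg_right h1 hC.le
    have h3 : (h 0 / (2 * C)) * C = h 0 / 2 := by field_simp
    rw [h3] at h2
    linarith
  -- choose lam1 with h lam1 < 0
  have hev1 : ∀ᶠ lam in nhdsWithin Λ (Set.Iio Λ), h lam < 0 :=
    htend.eventually (eventually_lt_atBot 0)
  have hev2 : ∀ᶠ lam in nhdsWithin Λ (Set.Iio Λ), lam ∈ Set.Ioo lam0 Λ :=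
    eventually_of_mem (Ioo_mem_nhdsLT_of_mem ⟨hlam0Λ, le_rfl⟩) (fun x hx => hx)
  obtain ⟨lam1, hlam1neg, hlam1mem⟩ := (hev1.and hev2).exists
  have hlam1q : lam1 * (1 + c) < 1 - η := (hΛiff lam1).mp hlam1mem.2
  have hcont : ContinuousOn h (Set.Icc lam0 lam1) :=
    back_contOn η c lam0 lam1 hη1 hη2 hc1 hc2 hlam0pos hlam1q h hh
  -- IVT
  obtain ⟨x, hxmem, hx0⟩ := intermediate_value_Icc' hlam1mem.1.le hcont
    ⟨hlam1neg.le, hlam0h.le⟩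
  -- least zero on [lam0, lam1]
  set Z : Set ℝ := Set.Icc lam0 lam1 ∩ h ⁻¹' {0} with hZ
  have hZclosed : IsClosed Z :=
    hcont.preimage_isClosed_of_isClosed isClosed_Icc isClosed_singleton
  have hZcompact : IsCompact Z :=
    isCompact_Icc.of_isClosed_subset hZclosed Set.inter_subset_left
  have hZne : Z.Nonempty := ⟨x, hxmem, hx0⟩
  obtain ⟨lamm, hlammZ, hlow⟩ := hZcompact.exists_isLeast hZne
  obtain ⟨hlammIcc, hlamm0⟩ := hlammZ
  have hlamm0' : h lamm = 0 := hlamm0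
  refine ⟨lamm, ⟨lt_of_lt_of_le hlam0pos hlammIcc.1,
    lt_of_le_of_lt hlammIcc.2 hlam1mem.2⟩, hlamm0', ?_⟩
  intro μ hμ hμ0
  by_cases hμlam0 : μ < lam0
  · exfalso
    have hmono := back_mono η c μ lam0 hη1 hη2 hc1 hc2 hμ.1.le hμlam0.le
      ((hΛiff lam0).mp hlam0Λ)
    rw [← hh lam0, ← hh μ] at hmono
    rw [hμ0] at hmono
    linarith
  · push_neg at hμlam0
    by_cases hμlam1 : μ ≤ lam1
    · exact hlow ⟨⟨hμlam0, hμlam1⟩, hμ0⟩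
    · push_neg at hμlam1
      linarith [hlammIcc.2]
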